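/- Let λ ≥ 0, γ ≥ 0 with λ·γ < 1, let z ∈ ℂⁿ, and let x̂ ∈ ℂⁿ be a minimizer of x ↦ (1/2)·∑_{i=1}^{n} |z_i − x_i|² + λ·P^c_γ(x). Then for every index i with x̂_i ≠ 0, one has z_i ≠ 0 and x̂_i / |x̂_i| = z_i / |z_i| (i.e., arg(x̂_i) = arg(z_i)). -/

import Mathlib

open Finset

/-- The complex penalty `Pc_gamma(x) = gamma * (sum_{i<m} |x_i| |x_m|) + sum_i |x_i|` on C^n. -/
noncomputable def Pc (n : ℕ) (γ : ℝ) (x : Fin n → ℂ) : ℝ :=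
  γ * (∑ i : Fin n, ∑ m ∈ Finset.Ioi i, ‖x i‖ * ‖x m‖) + ∑ i : Fin n, ‖x i‖

/-- The complex cost. -/
noncomputable def Cc (n : ℕ) (lam γ : ℝ) (z x : Fin n → ℂ) : ℝ :=
  (1 / 2) * ∑ i : Fin n, ‖z i - x i‖ ^ 2 + lam * Pc n γ x

lemma Pc_mono (n : ℕ) (γ : ℝ) (hγ : 0 ≤ γ) (x y : Fin n → ℂ)
    (h : ∀ j, ‖x j‖ ≤ ‖y j‖) : Pc n γ x ≤ Pc n γ y := by
  unfold Pc
  gcongr with i _ m _ <;> first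
    | exact norm_nonneg _
    | apply h

lemma key_ineq (n : ℕ) (lam γ : ℝ) (hlam : 0 ≤ lam) (hγ : 0 ≤ γ)
    (z xh : Fin n → ℂ) (hmin : ∀ x, Cc n lam γ z xh ≤ Cc n lam γ z x)
    (i : Fin n) (w : ℂ) (hw : ‖w‖ ≤ ‖xh i‖) :
    ‖z i - xh i‖ ^ 2 ≤ ‖z i - w‖ ^ 2 := by
  have hm := hmin (Function.update xh i w)
  unfold Cc at hm
  have hP : Pc n γ (Function.update xh i w) ≤ Pc n γ xh := by
    apply Pc_mono n γ hγ
    intro j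
    rcases eq_or_ne j i with rfl | hj
    · simpa using hw
    · simp [Function.update_of_ne hj]
  have hsum : ∑ j : Fin n, ‖z j - xh j‖ ^ 2 ≤
      ∑ j : Fin n, ‖z j - Function.update xh i w j‖ ^ 2 := by
    nlinarith [mul_le_mul_of_nonneg_left hP hlam]
  have h1 : ∑ j : Fin n, ‖z j - xh j‖ ^ 2
      = ‖z i - xh i‖ ^ 2 + ∑ j ∈ univ.erase i, ‖z j - xh j‖ ^ 2 :=
    (Finset.add_sum_erase _ _ (mem_univ i)).symm
  have h2 : ∑ j : Fin n, ‖z j - Function.update xh i w j‖ ^ 2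
      = ‖z i - w‖ ^ 2 + ∑ j ∈ univ.erase i, ‖z j - xh j‖ ^ 2 := by
    rw [← Finset.add_sum_erase _ _ (mem_univ i)]
    simp only [Function.update_self]
    congr 1
    apply Finset.sum_congr rfl
    intro j hj
    rw [Function.update_of_ne (Finset.ne_of_mem_erase hj)]
  rw [h1, h2] at hsum
  linarith

lemma real_key (p q r s A B : ℝ) (hA : 0 < A) (hB : 0 < B)
    (hA2 : A ^ 2 = p ^ 2 + q ^ 2) (hB2 : B ^ 2 = r ^ 2 + s ^ 2)
    (h : (p - r) ^ 2 + (q - s) ^ 2 ≤ (A - B) ^ 2) :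
    r * A = p * B ∧ s * A = q * B := by
  have hin : A * B ≤ p * r + q * s := by nlinarith
  have hcs : (p * s - q * r) ^ 2 = 0 := by
    nlinarith [sq_nonneg (p * s - q * r), mul_pos hA hB, sq_nonneg (p * r + q * s - A * B)]
  have hcs' : p * s - q * r = 0 := pow_eq_zero_iff (n := 2) (by norm_num) |>.mp hcs
  have hsq : (p * r + q * s) ^ 2 = (A * B) ^ 2 := by nlinarith
  have hin' : p * r + q * s = A * B := by nlinarith [mul_pos hA hB]
  constructor
  · nlinarith
  · nlinarith

lemma phase_eq (a b : ℂ) (ha : a ≠ 0) (hb : b ≠ 0)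
    (h : ‖a - b‖ ^ 2 ≤ (‖a‖ - ‖b‖) ^ 2) :
    b / (‖b‖ : ℂ) = a / (‖a‖ : ℂ) := by
  have hA : 0 < ‖a‖ := norm_pos_iff.mpr ha
  have hB : 0 < ‖b‖ := norm_pos_iff.mpr hb
  have hA2 : ‖a‖ ^ 2 = a.re ^ 2 + a.im ^ 2 := by
    rw [Complex.sq_norm, Complex.normSq_apply]; ring
  have hB2 : ‖b‖ ^ 2 = b.re ^ 2 + b.im ^ 2 := by
    rw [Complex.sq_norm, Complex.normSq_apply]; ring
  have hAB2 : ‖a - b‖ ^ 2 = (a.re - b.re) ^ 2 + (a.im - b.im) ^ 2 := by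
    rw [Complex.sq_norm, Complex.normSq_apply]
    simp [Complex.sub_re, Complex.sub_im]; ring
  obtain ⟨hr, hs⟩ := real_key a.re a.im b.re b.im ‖a‖ ‖b‖ hA hB hA2 hB2 (by linarith)
  have hA' : (‖a‖ : ℂ) ≠ 0 := by exact_mod_cast hA.ne'
  have hB' : (‖b‖ : ℂ) ≠ 0 := by exact_mod_cast hB.ne'
  rw [div_eq_div_iff hB' hA']
  apply Complex.ext <;>
    simp only [Complex.mul_re, Complex.mul_im, Complex.ofReal_re, Complex.ofReal_im,
      mul_zero, zero_mul, sub_zero, add_zero, zero_add] <;> linarith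

/-- Lemma 2: any nonzero component of the complex minimizer has the same argument as
the corresponding component of `z`. -/
theorem complex_arg (n : ℕ) (lam γ : ℝ) (hlam : 0 ≤ lam) (hγ : 0 ≤ γ)
    (hlγ : lam * γ < 1) (z xh : Fin n → ℂ)
    (hmin : ∀ x, Cc n lam γ z xh ≤ Cc n lam γ z x) :
    ∀ i : Fin n, xh i ≠ 0 →
      z i ≠ 0 ∧ xh i / (‖xh i‖ : ℂ) = z i / (‖z i‖ : ℂ) := by
  intro i hxi
  have hxin : 0 < ‖xh i‖ := norm_pos_iff.mpr hxi
  have hz : z i ≠ 0 := by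
    intro hz0
    have hk := key_ineq n lam γ hlam hγ z xh hmin i 0 (by simp)
    rw [hz0] at hk
    simp only [zero_sub, norm_neg, sub_zero, norm_zero] at hk
    nlinarith
  refine ⟨hz, ?_⟩
  have hzn : 0 < ‖z i‖ := norm_pos_iff.mpr hz
  have hzn' : ((‖z i‖ : ℝ) : ℂ) ≠ 0 := by exact_mod_cast hzn.ne'
  set w : ℂ := z i / (‖z i‖ : ℂ) * (‖xh i‖ : ℂ) with hw
  have hwn : ‖w‖ = ‖xh i‖ := by
    rw [hw, norm_mul, norm_div, Complex.norm_real, Complex.norm_real,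
      div_mul_eq_mul_div, Real.norm_eq_abs, Real.norm_eq_abs,
      abs_of_pos hzn, abs_of_pos hxin, mul_comm, mul_div_assoc,
      div_self hzn.ne', mul_one]
  have hk := key_ineq n lam γ hlam hγ z xh hmin i w hwn.le
  have h1 : ‖z i - w‖ ^ 2 = (‖z i‖ - ‖xh i‖) ^ 2 := by
    have he : z i - w = z i / (‖z i‖ : ℂ) * ((‖z i‖ - ‖xh i‖ : ℝ) : ℂ) := by
      rw [hw, Complex.ofReal_sub, mul_sub, div_mul_cancel₀ _ hzn']
    rw [he, norm_mul, norm_div, Complex.norm_real, Complex.norm_real,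
      Real.norm_eq_abs, Real.norm_eq_abs, abs_of_pos hzn, div_self hzn.ne',
      one_mul, sq_abs]
  rw [h1] at hk
  exact phase_eq (z i) (xh i) hz hxi hk
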